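/- For 1 < p < ∞ and 2/(1+ε) < r < 2 with ε > 0, the function f(z₂) = (z₂−1)^{−r} (principal branch on the slit plane with ½π < arg(z₂−1) < 3π/2) belongs to L^p(△², μ) where μ(z) = |z₂−1|^{r(p−1)}, and the weight μ belongs to A_p*. -/

import Mathlib

open MeasureTheory
open scoped ENNReal NNReal

noncomputable section

/-- The argument of `w` chosen in the branch `(π/2, 3π/2)`-compatible way: the standard
argument shifted by `2π` when negative, so that for `Re w < 0` it lies in `(π/2, 3π/2)`. -/
def branchArg (w : ℂ) : ℝ :=
  if Complex.arg w < 0 then Complex.arg w + 2 * Real.pi else Complex.arg w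

/-- The power `w^s` defined with the branch of the logarithm with argument in
`(π/2, 3π/2)` (for the relevant `w` with `Re w < 0`). -/
def branchCpow (w s : ℂ) : ℂ :=
  Complex.exp (s * (Complex.ofReal (Real.log ‖w‖) + Complex.ofReal (branchArg w) * Complex.I))

/-- The average of `g` over the disc of center `c` and radius `r` in `ℂ`. -/
def discAvg (g : ℂ → ℝ) (c : ℂ) (r : ℝ) : ℝ :=
  (volume (Metric.ball c r)).toReal⁻¹ * ∫ x in Metric.ball c r, g x

/-- The class `A_p^*` on `ℂ²`: each one-variable slice of `μ` satisfies the Muckenhoupt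
`A_p` condition over discs, with a uniform constant. -/
def IsApStar2 (p : ℝ) (μ : ℂ × ℂ → ℝ) : Prop :=
  ∃ C : ℝ,
    (∀ᵐ w₂ : ℂ ∂volume, ∀ (c : ℂ) (r : ℝ), 0 < r →
      discAvg (fun w₁ => μ (w₁, w₂)) c r *
        (discAvg (fun w₁ => μ (w₁, w₂) ^ (1 / (1 - p))) c r) ^ (p - 1) ≤ C) ∧
    (∀ᵐ w₁ : ℂ ∂volume, ∀ (c : ℂ) (r : ℝ), 0 < r →
      discAvg (fun w₂ => μ (w₁, w₂)) c r *
        (discAvg (fun w₂ => μ (w₁, w₂) ^ (1 / (1 - p))) c r) ^ (p - 1) ≤ C)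

namespace KerzmanAux

open Metric Set

lemma vol_ball_C (c : ℂ) (ρ : ℝ) (hρ : 0 ≤ ρ) :
    volume (ball c ρ) = ENNReal.ofReal (ρ ^ 2) * volume (ball (0:ℂ) 1) := by
  have := Measure.addHaar_ball (volume : Measure ℂ) c hρ
  rwa [Complex.finrank_real_complex] at this

lemma lint_neg_pow (s R : ℝ) (hs0 : 0 < s) (hs2 : s < 2) (hR : 0 < R) :
    ∫⁻ w : ℂ in ball 0 R, ENNReal.ofReal (‖w‖ ^ (-s))
      ≤ volume (ball (0:ℂ) 1) * ENNReal.ofReal ((1 + s/(2-s)) * R ^ (2-s)) := by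
  set v := volume (ball (0:ℂ) 1) with hv
  have h2s : (0:ℝ) < 2 - s := by linarith
  have hvolc : ∀ (ρ : ℝ), 0 ≤ ρ → volume (closedBall (0:ℂ) ρ) = ENNReal.ofReal (ρ ^ 2) * v := by
    intro ρ hρ
    have := Measure.addHaar_closedBall (volume : Measure ℂ) 0 hρ
    rwa [Complex.finrank_real_complex] at this
  set ν := volume.restrict (ball (0:ℂ) R) with hν
  have hmeas : Measurable fun w : ℂ => ‖w‖ ^ (-s) := by fun_prop
  rw [lintegral_eq_lintegral_meas_le ν
      (Filter.Eventually.of_forall fun x => Real.rpow_nonneg (norm_nonneg x) _)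
      hmeas.aemeasurable]
  set T := R ^ (-s) with hT
  have hTpos : 0 < T := Real.rpow_pos_of_pos hR _
  calc ∫⁻ t in Ioi 0, ν {a | t ≤ ‖a‖ ^ (-s)}
      ≤ ∫⁻ t in Ioc 0 T ∪ Ioi T, ν {a | t ≤ ‖a‖ ^ (-s)} := by
        refine lintegral_mono_set (fun t ht => ?_)
        rcases le_or_gt t T with h | h
        · exact Or.inl ⟨ht, h⟩
        · exact Or.inr h
    _ ≤ (∫⁻ t in Ioc 0 T, ν {a | t ≤ ‖a‖ ^ (-s)}) + ∫⁻ t in Ioi T, ν {a | t ≤ ‖a‖ ^ (-s)} :=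
        lintegral_union_le _ _ _
    _ ≤ v * ENNReal.ofReal (R ^ (2-s)) + v * ENNReal.ofReal (s/(2-s) * R ^ (2-s)) := by
        gcongr
        · -- small t piece
          calc ∫⁻ t in Ioc 0 T, ν {a | t ≤ ‖a‖ ^ (-s)}
              ≤ ∫⁻ _t in Ioc 0 T, ν univ :=
                lintegral_mono (fun t => measure_mono (subset_univ _))
            _ = ENNReal.ofReal (R ^ 2) * v * ENNReal.ofReal T := by
                rw [setLIntegral_const, hν, Measure.restrict_apply_univ, vol_ball_C 0 R hR.le,
                  Real.volume_Ioc, sub_zero]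
            _ = v * ENNReal.ofReal (R ^ (2-s)) := by
                rw [mul_comm (ENNReal.ofReal (R ^ 2)) v, mul_assoc,
                  ← ENNReal.ofReal_mul (by positivity)]
                congr 2
                rw [hT, ← Real.rpow_natCast R 2, ← Real.rpow_add hR, sub_eq_add_neg]
                norm_num
        · -- large t piece
          have hsub : ∀ t, 0 < t → {a : ℂ | t ≤ ‖a‖ ^ (-s)} ⊆ closedBall 0 (t ^ (-s⁻¹)) := by
            intro t ht a ha
            simp only [mem_setOf_eq] at ha
            have hna : 0 < ‖a‖ := by
              rcases eq_or_lt_of_le (norm_nonneg a) with h | h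
              · exfalso
                rw [← h, Real.zero_rpow (neg_ne_zero.mpr hs0.ne')] at ha
                linarith
              · exact h
            have h1 : (‖a‖ ^ (-s)) ^ (-s⁻¹) ≤ t ^ (-s⁻¹) :=
              Real.rpow_le_rpow_of_nonpos ht ha (by simp [hs0.le, inv_nonneg])
            rw [← Real.rpow_mul (norm_nonneg a)] at h1
            rw [mem_closedBall_zero_iff]
            have he : -s * -s⁻¹ = 1 := by field_simp
            rwa [he, Real.rpow_one] at h1
          calc ∫⁻ t in Ioi T, ν {a | t ≤ ‖a‖ ^ (-s)}
              ≤ ∫⁻ t in Ioi T, v * ENNReal.ofReal (t ^ (-(2/s))) := by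
                refine setLIntegral_mono' measurableSet_Ioi (fun t ht => ?_)
                have htpos : 0 < t := lt_trans hTpos ht
                calc ν {a : ℂ | t ≤ ‖a‖ ^ (-s)}
                    ≤ volume {a : ℂ | t ≤ ‖a‖ ^ (-s)} := Measure.restrict_apply_le _ _
                  _ ≤ volume (closedBall (0:ℂ) (t ^ (-s⁻¹))) := measure_mono (hsub t htpos)
                  _ = ENNReal.ofReal ((t ^ (-s⁻¹)) ^ 2) * v := hvolc _ (Real.rpow_nonneg htpos.le _)
                  _ = v * ENNReal.ofReal (t ^ (-(2/s))) := by
                      rw [mul_comm]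
                      congr 2
                      rw [← Real.rpow_natCast (t ^ (-s⁻¹)) 2, ← Real.rpow_mul htpos.le]
                      congr 1
                      field_simp
                      norm_num
            _ = v * ∫⁻ t in Ioi T, ENNReal.ofReal (t ^ (-(2/s))) :=
                lintegral_const_mul' _ _ measure_ball_lt_top.ne
            _ = v * ENNReal.ofReal (∫ t in Ioi T, t ^ (-(2/s))) := by
                rw [ofReal_integral_eq_lintegral_ofReal
                  (integrableOn_Ioi_rpow_of_lt (by rw [neg_lt, neg_neg, lt_div_iff₀ hs0]; linarith) hTpos)
                  ((ae_restrict_iff' measurableSet_Ioi).mpr (Filter.Eventually.of_forall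
                    (fun t ht => Real.rpow_nonneg (le_of_lt (lt_trans hTpos ht)) _)))]
            _ = v * ENNReal.ofReal (s/(2-s) * R ^ (2-s)) := by
                congr 1
                rw [integral_Ioi_rpow_of_lt (by rw [neg_lt, neg_neg, lt_div_iff₀ hs0]; linarith) hTpos]
                have h1 : -(2/s) + 1 = -((2-s)/s) := by
                  field_simp
                  ring
                have hTe : T ^ (-(2/s) + 1) = R ^ (2 - s) := by
                  rw [hT, ← Real.rpow_mul hR.le]
                  congr 1
                  rw [h1]
                  field_simp
                rw [hTe, h1, neg_div_neg_eq, div_div_eq_mul_div]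
                ring
    _ = v * ENNReal.ofReal ((1 + s/(2-s)) * R ^ (2-s)) := by
        rw [← mul_add, ← ENNReal.ofReal_add (Real.rpow_nonneg hR.le _)
          (mul_nonneg (div_nonneg hs0.le h2s.le) (Real.rpow_nonneg hR.le _))]
        congr 1
        ring

lemma lint_ball_shift (a : ℝ) (z c : ℂ) (ρ : ℝ) :
    ∫⁻ w in ball c ρ, ENNReal.ofReal (‖w - z‖ ^ a)
      = ∫⁻ u in ball (c - z) ρ, ENNReal.ofReal (‖u‖ ^ a) := by
  have hmp : MeasurePreserving (fun u : ℂ => u + z) volume volume :=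
    measurePreserving_add_right volume z
  have hemb : MeasurableEmbedding (fun u : ℂ => u + z) :=
    (MeasurableEquiv.addRight z).measurableEmbedding
  have hpre : (fun u : ℂ => u + z) ⁻¹' (ball c ρ) = ball (c - z) ρ := by
    ext u
    simp only [mem_preimage, Metric.mem_ball, dist_eq_norm]
    constructor <;> intro h <;>
      · convert h using 2
        ring
  have := hmp.setLIntegral_comp_preimage_emb hemb
    (fun w => ENNReal.ofReal (‖w - z‖ ^ a)) (ball c ρ)
  rw [hpre] at this
  rw [← this]
  simp

lemma lint_pos_pow (a R : ℝ) (ha : 0 ≤ a) (hR : 0 < R) :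
    ∫⁻ w : ℂ in ball 0 R, ENNReal.ofReal (‖w‖ ^ a)
      ≤ volume (ball (0:ℂ) 1) * ENNReal.ofReal (R ^ (a + 2)) := by
  calc ∫⁻ w : ℂ in ball 0 R, ENNReal.ofReal (‖w‖ ^ a)
      ≤ ∫⁻ _w : ℂ in ball 0 R, ENNReal.ofReal (R ^ a) := by
        refine setLIntegral_mono' measurableSet_ball (fun w hw => ?_)
        exact ENNReal.ofReal_le_ofReal
          (Real.rpow_le_rpow (norm_nonneg w) (le_of_lt (mem_ball_zero_iff.mp hw)) ha)
    _ = ENNReal.ofReal (R ^ a) * volume (ball (0:ℂ) R) := setLIntegral_const _ _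
    _ = volume (ball (0:ℂ) 1) * ENNReal.ofReal (R ^ (a + 2)) := by
        rw [vol_ball_C 0 R hR.le, ← mul_assoc, ← ENNReal.ofReal_mul (Real.rpow_nonneg hR.le _),
          mul_comm _ (volume (ball (0:ℂ) 1))]
        congr 2
        rw [← Real.rpow_natCast R 2, ← Real.rpow_add hR]
        norm_num

lemma volBall_toReal_pos (c : ℂ) (ρ : ℝ) (hρ : 0 < ρ) :
    0 < (volume (ball c ρ)).toReal :=
  ENNReal.toReal_pos (measure_ball_pos volume c hρ).ne' measure_ball_lt_top.ne

lemma discAvg_nonneg {g : ℂ → ℝ} (h : ∀ w, 0 ≤ g w) (c : ℂ) (ρ : ℝ) :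
    0 ≤ discAvg g c ρ :=
  mul_nonneg (inv_nonneg.mpr ENNReal.toReal_nonneg) (integral_nonneg h)

lemma discAvg_const (m : ℝ) (c : ℂ) (ρ : ℝ) (hρ : 0 < ρ) :
    discAvg (fun _ => m) c ρ = m := by
  rw [discAvg, setIntegral_const, measureReal_def, smul_eq_mul, ← mul_assoc,
    inv_mul_cancel₀ (volBall_toReal_pos c ρ hρ).ne', one_mul]

lemma discAvg_le_of_lintegral {g : ℂ → ℝ} (hg : Measurable g) (h0 : ∀ w, 0 ≤ g w)
    {c : ℂ} {ρ k : ℝ} (hρ : 0 < ρ) (hk : 0 ≤ k)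
    (h : ∫⁻ w in ball c ρ, ENNReal.ofReal (g w)
        ≤ ENNReal.ofReal ((volume (ball c ρ)).toReal * k)) :
    discAvg g c ρ ≤ k := by
  have hT := volBall_toReal_pos c ρ hρ
  have hint : ∫ w in ball c ρ, g w
      = (∫⁻ w in ball c ρ, ENNReal.ofReal (g w)).toReal := by
    rw [integral_eq_lintegral_of_nonneg_ae (Filter.Eventually.of_forall h0)
      hg.aestronglyMeasurable]
  have h2 : ∫ w in ball c ρ, g w ≤ (volume (ball c ρ)).toReal * k := by
    rw [hint]
    calc (∫⁻ w in ball c ρ, ENNReal.ofReal (g w)).toReal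
        ≤ (ENNReal.ofReal ((volume (ball c ρ)).toReal * k)).toReal :=
          ENNReal.toReal_mono ENNReal.ofReal_ne_top h
      _ = (volume (ball c ρ)).toReal * k := ENNReal.toReal_ofReal (by positivity)
  calc discAvg g c ρ ≤ (volume (ball c ρ)).toReal⁻¹ * ((volume (ball c ρ)).toReal * k) := by
        rw [discAvg]
        exact mul_le_mul_of_nonneg_left h2 (by positivity)
    _ = k := by
        rw [← mul_assoc, inv_mul_cancel₀ hT.ne', one_mul]

lemma discAvg_le_of_bound {g : ℂ → ℝ} (hg : Measurable g) (h0 : ∀ w, 0 ≤ g w)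
    {c : ℂ} {ρ M : ℝ} (hρ : 0 < ρ) (hM : 0 ≤ M)
    (hb : ∀ w ∈ ball c ρ, g w ≤ M) :
    discAvg g c ρ ≤ M := by
  refine discAvg_le_of_lintegral hg h0 hρ hM ?_
  calc ∫⁻ w in ball c ρ, ENNReal.ofReal (g w)
      ≤ ∫⁻ _w in ball c ρ, ENNReal.ofReal M :=
        setLIntegral_mono' measurableSet_ball (fun w hw => ENNReal.ofReal_le_ofReal (hb w hw))
    _ = ENNReal.ofReal M * volume (ball c ρ) := setLIntegral_const _ _
    _ = ENNReal.ofReal ((volume (ball c ρ)).toReal * M) := by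
        rw [ENNReal.ofReal_mul ENNReal.toReal_nonneg, ENNReal.ofReal_toReal measure_ball_lt_top.ne,
          mul_comm]

lemma norm_branchCpow (w : ℂ) (t : ℝ) (hw : w ≠ 0) :
    ‖branchCpow w (-(t:ℂ))‖ = ‖w‖ ^ (-t) := by
  rw [branchCpow, Complex.norm_exp]
  have hre : ((-(t:ℂ)) * (Complex.ofReal (Real.log ‖w‖)
        + Complex.ofReal (branchArg w) * Complex.I)).re = -t * Real.log ‖w‖ := by
    simp [Complex.mul_re, Complex.add_re, Complex.add_im]
  rw [hre, Real.rpow_def_of_pos (norm_pos_iff.mpr hw), mul_comm]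

lemma integrand_eq (p t : ℝ) (w : ℂ) (hw : w ≠ 0) :
    (‖branchCpow w (-(t : ℂ))‖₊ : ℝ≥0∞) ^ p * ENNReal.ofReal (‖w‖ ^ (t * (p - 1)))
      = ENNReal.ofReal (‖w‖ ^ (-t * p + t * (p - 1))) := by
  have hnorm : (‖branchCpow w (-(t:ℂ))‖₊ : ℝ≥0∞) = ENNReal.ofReal (‖w‖ ^ (-t)) := by
    rw [← enorm_eq_nnnorm, ← ofReal_norm, norm_branchCpow w t hw]
  have hpos : (0:ℝ) < ‖w‖ := norm_pos_iff.mpr hw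
  rw [hnorm, ENNReal.ofReal_rpow_of_pos (Real.rpow_pos_of_pos hpos _),
    ← Real.rpow_mul hpos.le, ← ENNReal.ofReal_mul (Real.rpow_nonneg (norm_nonneg w) _),
    ← Real.rpow_add hpos]

lemma lintegral_prod_snd (g : ℂ → ℝ≥0∞) (hg : Measurable g) (S T : Set ℂ) :
    ∫⁻ z in S ×ˢ T, g z.2 = volume S * ∫⁻ y in T, g y := by
  rw [Measure.volume_eq_prod, ← Measure.prod_restrict,
    lintegral_prod (fun z : ℂ × ℂ => g z.2) ((hg.comp measurable_snd).aemeasurable)]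
  simp only
  rw [lintegral_const, Measure.restrict_apply_univ, mul_comm]

end KerzmanAux

/-- For `1 < p < ∞` and `2/(1+ε) < r < 2` with `ε > 0`, the function
`f(z) = (z₂−1)^{−r}` (branch `½π < arg(z₂−1) < 3π/2`) belongs to `L^p(△², μ)` where
`μ(z) = |z₂−1|^{r(p−1)}`, and the weight `μ` belongs to `A_p^*`. -/
theorem kerzman_data_in_weighted_Lp (p ε r : ℝ) (hp1 : 1 < p) (hε : 0 < ε)
    (hr1 : 2 / (1 + ε) < r) (hr2 : r < 2) :
    (∫⁻ z in (Metric.ball (0 : ℂ) 1) ×ˢ (Metric.ball (0 : ℂ) 1),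
        (‖branchCpow (z.2 - 1) (-(r : ℂ))‖₊ : ℝ≥0∞) ^ p
          * ENNReal.ofReal (‖z.2 - 1‖ ^ (r * (p - 1)))) < ⊤ ∧
    IsApStar2 p (fun z => ‖z.2 - 1‖ ^ (r * (p - 1))) := by
  have hr0 : 0 < r := by
    have : (0:ℝ) < 2 / (1 + ε) := div_pos two_pos (by linarith)
    linarith
  have hp0 : (0:ℝ) < p - 1 := by linarith
  have h2r : (0:ℝ) < 2 - r := by linarith
  constructor
  · -- `f ∈ L^p(△², μ)`
    have hcong : ∀ z ∈ (Metric.ball (0:ℂ) 1) ×ˢ (Metric.ball (0:ℂ) 1),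
        (‖branchCpow (z.2 - 1) (-(r : ℂ))‖₊ : ℝ≥0∞) ^ p
          * ENNReal.ofReal (‖z.2 - 1‖ ^ (r * (p - 1)))
        = ENNReal.ofReal (‖z.2 - 1‖ ^ (-r)) := by
      intro z hz
      have hz2 : z.2 - 1 ≠ 0 := by
        intro h
        have h1 : z.2 = 1 := by
          have := sub_eq_zero.mp h
          exact this
        have h2 : ‖z.2‖ < 1 := mem_ball_zero_iff.mp hz.2
        rw [h1] at h2
        simp at h2
      rw [KerzmanAux.integrand_eq p r (z.2 - 1) hz2]
      congr 2
      ring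
    rw [setLIntegral_congr_fun (measurableSet_ball.prod measurableSet_ball)
      hcong,
      KerzmanAux.lintegral_prod_snd (fun y => ENNReal.ofReal (‖y - 1‖ ^ (-r))) (by fun_prop) _ _]
    refine ENNReal.mul_lt_top measure_ball_lt_top ?_
    rw [KerzmanAux.lint_ball_shift (-r) 1 0 1]
    have hsub : Metric.ball ((0:ℂ) - 1) 1 ⊆ Metric.ball (0:ℂ) 2 := by
      intro u hu
      rw [Metric.mem_ball, dist_eq_norm] at hu ⊢
      have h1 : u - 0 = (u - ((0:ℂ) - 1)) + ((0:ℂ) - 1) := by ring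
      calc ‖u - 0‖ ≤ ‖u - ((0:ℂ) - 1)‖ + ‖(0:ℂ) - 1‖ := by rw [h1]; exact norm_add_le _ _
        _ < 2 := by
            have : ‖(0:ℂ) - 1‖ = 1 := by simp
            linarith
    calc ∫⁻ u in Metric.ball ((0:ℂ) - 1) 1, ENNReal.ofReal (‖u‖ ^ (-r))
        ≤ ∫⁻ u in Metric.ball (0:ℂ) 2, ENNReal.ofReal (‖u‖ ^ (-r)) := lintegral_mono_set hsub
      _ ≤ volume (Metric.ball (0:ℂ) 1) * ENNReal.ofReal ((1 + r/(2-r)) * 2 ^ (2-r)) :=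
          KerzmanAux.lint_neg_pow r 2 hr0 hr2 two_pos
      _ < ⊤ := ENNReal.mul_lt_top measure_ball_lt_top ENNReal.ofReal_lt_top
  · -- the weight is in `A_p^*`
    set α := r * (p - 1) with hα
    have hαpos : 0 < α := mul_pos hr0 hp0
    set V := (volume (Metric.ball (0:ℂ) 1)).toReal with hV
    have hVpos : 0 < V := KerzmanAux.volBall_toReal_pos 0 1 one_pos
    have hv : volume (Metric.ball (0:ℂ) 1) = ENNReal.ofReal V :=
      (ENNReal.ofReal_toReal measure_ball_lt_top.ne).symm
    set kk := 1 + r/(2-r) with hkk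
    have hkkpos : 0 < kk := by positivity
    set C1 := (3:ℝ) ^ α with hC1
    set C2 := (3:ℝ) ^ (α+2) * ((3:ℝ) ^ (2-r) * kk) ^ (p-1) with hC2
    have hC1nn : 0 ≤ C1 := Real.rpow_nonneg (by norm_num) _
    have hC2nn : 0 ≤ C2 :=
      mul_nonneg (Real.rpow_nonneg (by norm_num) _) (Real.rpow_nonneg (by positivity) _)
    refine ⟨max 1 (max C1 C2), ?_, ?_⟩
    · -- first slice : constant weight
      have hae : ∀ᵐ w₂ : ℂ ∂volume, w₂ ≠ 1 := by
        rw [ae_iff]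
        have hs : {a : ℂ | ¬a ≠ 1} = {1} := by ext a; simp
        rw [hs]
        exact measure_singleton 1
      filter_upwards [hae] with w₂ hw₂ c ρ hρ
      have hk0 : 0 < ‖w₂ - 1‖ ^ α :=
        Real.rpow_pos_of_pos (norm_pos_iff.mpr (sub_ne_zero.mpr hw₂)) _
      rw [KerzmanAux.discAvg_const _ c ρ hρ, KerzmanAux.discAvg_const _ c ρ hρ,
        ← Real.rpow_mul hk0.le]
      have hexp : 1 / (1 - p) * (p - 1) = -1 := by
        have h1p : (1:ℝ) - p ≠ 0 := ne_of_lt (by linarith)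
        field_simp
        ring
      rw [hexp, Real.rpow_neg_one, mul_inv_cancel₀ hk0.ne']
      exact le_max_left 1 _
    · -- second slice : genuine `A_p` estimate for a power weight
      refine Filter.Eventually.of_forall (fun w₁ c ρ hρ => ?_)
      have hdual : (fun w₂ : ℂ => (‖w₂ - 1‖ ^ α) ^ (1 / (1 - p)))
          = fun w₂ : ℂ => ‖w₂ - 1‖ ^ (-r) := by
        funext w
        rw [← Real.rpow_mul (norm_nonneg _)]
        congr 1
        have h1p : (1:ℝ) - p ≠ 0 := ne_of_lt (by linarith)
        rw [hα]
        field_simp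
        ring
      rw [hdual]
      have hmeasA : Measurable fun w : ℂ => ‖w - 1‖ ^ α := by fun_prop
      have hmeasB : Measurable fun w : ℂ => ‖w - 1‖ ^ (-r) := by fun_prop
      have hnnA : ∀ w : ℂ, 0 ≤ ‖w - 1‖ ^ α := fun w => Real.rpow_nonneg (norm_nonneg _) _
      have hnnB : ∀ w : ℂ, 0 ≤ ‖w - 1‖ ^ (-r) := fun w => Real.rpow_nonneg (norm_nonneg _) _
      have hBnn : 0 ≤ discAvg (fun w₂ : ℂ => ‖w₂ - 1‖ ^ (-r)) c ρ :=
        KerzmanAux.discAvg_nonneg hnnB c ρ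
      by_cases hcase : 2 * ρ ≤ ‖c - 1‖
      · -- the disc is far from the singularity
        set d := ‖c - 1‖ with hd
        have hdpos : 0 < d := lt_of_lt_of_le (by linarith) hcase
        have hA : discAvg (fun w₂ : ℂ => ‖w₂ - 1‖ ^ α) c ρ ≤ (3/2*d) ^ α := by
          refine KerzmanAux.discAvg_le_of_bound hmeasA hnnA hρ
            (Real.rpow_nonneg (by positivity) _) (fun w hw => ?_)
          refine Real.rpow_le_rpow (norm_nonneg _) ?_ hαpos.le
          have h1 : ‖w - 1‖ ≤ ‖w - c‖ + ‖c - 1‖ := by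
            have h2 := norm_add_le (w - c) (c - 1)
            have h3 : (w - c) + (c - 1) = w - 1 := by ring
            rwa [h3] at h2
          rw [Metric.mem_ball, dist_eq_norm] at hw
          linarith
        have hB : discAvg (fun w₂ : ℂ => ‖w₂ - 1‖ ^ (-r)) c ρ ≤ (d/2) ^ (-r) := by
          refine KerzmanAux.discAvg_le_of_bound hmeasB hnnB hρ
            (Real.rpow_nonneg (by positivity) _) (fun w hw => ?_)
          have h2 : d/2 ≤ ‖w - 1‖ := by
            have h1 : d ≤ ‖c - w‖ + ‖w - 1‖ := by
              have h2' := norm_add_le (c - w) (w - 1)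
              have h3 : (c - w) + (w - 1) = c - 1 := by ring
              rwa [h3] at h2'
            rw [Metric.mem_ball, dist_eq_norm, ← norm_sub_rev c w] at hw
            linarith
          exact Real.rpow_le_rpow_of_nonpos (by positivity) h2 (by linarith)
        calc discAvg (fun w₂ : ℂ => ‖w₂ - 1‖ ^ α) c ρ *
              discAvg (fun w₂ : ℂ => ‖w₂ - 1‖ ^ (-r)) c ρ ^ (p-1)
            ≤ (3/2*d) ^ α * ((d/2) ^ (-r)) ^ (p-1) :=
              mul_le_mul hA (Real.rpow_le_rpow hBnn hB hp0.le)
                (Real.rpow_nonneg hBnn _) (Real.rpow_nonneg (by positivity) _)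
          _ = C1 := by
              rw [← Real.rpow_mul (by positivity : (0:ℝ) ≤ d/2)]
              have he : -r * (p-1) = -α := by rw [hα]; ring
              rw [he, Real.rpow_neg (by positivity), ← div_eq_mul_inv,
                ← Real.div_rpow (by positivity) (by positivity)]
              have h3 : 3/2*d / (d/2) = 3 := by field_simp
              rw [h3]
          _ ≤ max 1 (max C1 C2) := le_trans (le_max_left C1 C2) (le_max_right 1 _)
      · -- the disc is close to the singularity
        push_neg at hcase
        have hT : (volume (Metric.ball c ρ)).toReal = ρ^2 * V := by
          rw [KerzmanAux.vol_ball_C c ρ hρ.le, ENNReal.toReal_mul,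
            ENNReal.toReal_ofReal (by positivity), hV]
        have hsub3 : Metric.ball (c - 1) ρ ⊆ Metric.ball (0:ℂ) (3*ρ) := by
          intro u hu
          rw [Metric.mem_ball, dist_eq_norm] at hu ⊢
          have h1 : u - 0 = (u - (c - 1)) + (c - 1) := by ring
          calc ‖u - 0‖ ≤ ‖u - (c - 1)‖ + ‖c - 1‖ := by rw [h1]; exact norm_add_le _ _
            _ < 3 * ρ := by linarith
        have hρ2 : ∀ b : ℝ, ρ ^ (b + 2) = ρ ^ b * ρ ^ (2:ℕ) := by
          intro b
          rw [← Real.rpow_natCast ρ 2, ← Real.rpow_add hρ]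
          norm_num
        have hA : discAvg (fun w₂ : ℂ => ‖w₂ - 1‖ ^ α) c ρ ≤ 3 ^ (α+2) * ρ ^ α := by
          refine KerzmanAux.discAvg_le_of_lintegral hmeasA hnnA hρ (by positivity) ?_
          calc ∫⁻ w in Metric.ball c ρ, ENNReal.ofReal (‖w - 1‖ ^ α)
              = ∫⁻ u in Metric.ball (c - 1) ρ, ENNReal.ofReal (‖u‖ ^ α) :=
                KerzmanAux.lint_ball_shift α 1 c ρ
            _ ≤ ∫⁻ u in Metric.ball (0:ℂ) (3*ρ), ENNReal.ofReal (‖u‖ ^ α) :=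
                lintegral_mono_set hsub3
            _ ≤ volume (Metric.ball (0:ℂ) 1) * ENNReal.ofReal ((3*ρ) ^ (α+2)) :=
                KerzmanAux.lint_pos_pow α (3*ρ) hαpos.le (by positivity)
            _ = ENNReal.ofReal ((volume (Metric.ball c ρ)).toReal * (3 ^ (α+2) * ρ ^ α)) := by
                rw [hT, hv, ← ENNReal.ofReal_mul hVpos.le]
                congr 1
                rw [Real.mul_rpow (by norm_num) hρ.le, hρ2 α]
                ring
        have hB : discAvg (fun w₂ : ℂ => ‖w₂ - 1‖ ^ (-r)) c ρ
            ≤ 3 ^ (2-r) * kk * ρ ^ (-r) := by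
          refine KerzmanAux.discAvg_le_of_lintegral hmeasB hnnB hρ (by positivity) ?_
          calc ∫⁻ w in Metric.ball c ρ, ENNReal.ofReal (‖w - 1‖ ^ (-r))
              = ∫⁻ u in Metric.ball (c - 1) ρ, ENNReal.ofReal (‖u‖ ^ (-r)) :=
                KerzmanAux.lint_ball_shift (-r) 1 c ρ
            _ ≤ ∫⁻ u in Metric.ball (0:ℂ) (3*ρ), ENNReal.ofReal (‖u‖ ^ (-r)) :=
                lintegral_mono_set hsub3
            _ ≤ volume (Metric.ball (0:ℂ) 1) * ENNReal.ofReal (kk * (3*ρ) ^ (2-r)) :=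
                KerzmanAux.lint_neg_pow r (3*ρ) hr0 hr2 (by positivity)
            _ = ENNReal.ofReal ((volume (Metric.ball c ρ)).toReal
                  * (3 ^ (2-r) * kk * ρ ^ (-r))) := by
                rw [hT, hv, ← ENNReal.ofReal_mul hVpos.le]
                congr 1
                rw [Real.mul_rpow (by norm_num) hρ.le]
                have h2r' : ρ ^ (2-r) = ρ ^ (-r) * ρ ^ (2:ℕ) := by
                  have := hρ2 (-r)
                  rw [(by ring : -r + 2 = 2 - r)] at this
                  exact this
                rw [h2r']
                ring
        calc discAvg (fun w₂ : ℂ => ‖w₂ - 1‖ ^ α) c ρ *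
              discAvg (fun w₂ : ℂ => ‖w₂ - 1‖ ^ (-r)) c ρ ^ (p-1)
            ≤ (3 ^ (α+2) * ρ ^ α) * (3 ^ (2-r) * kk * ρ ^ (-r)) ^ (p-1) :=
              mul_le_mul hA (Real.rpow_le_rpow hBnn hB hp0.le)
                (Real.rpow_nonneg hBnn _) (by positivity)
          _ = C2 := by
              rw [Real.mul_rpow (by positivity) (Real.rpow_nonneg hρ.le _),
                ← Real.rpow_mul hρ.le]
              have he : -r * (p-1) = -α := by rw [hα]; ring
              rw [he, Real.rpow_neg hρ.le, hC2]
              have hρα : ρ ^ α ≠ 0 := (Real.rpow_pos_of_pos hρ _).ne'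
              field_simp
          _ ≤ max 1 (max C1 C2) := le_trans (le_max_right C1 C2) (le_max_right 1 _)
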